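/- arXiv:math/0609845 — 5 statements merged into one kernel-verified Lean document; each statement's English description precedes it below -/
import Mathlib

section
/- Let q ≥ 2 and 0 ≤ r < q. Then the limit as n → ∞ of (∑_{i=0}^{⌊(n-1)/q⌋} C(n-1, iq+r)) / 2^{n-1} equals 1/q. -/
open Filter Finset

private lemma geomsum_prim {q : ℕ} (hq : 0 < q) {ζ : ℂ} (hζ : IsPrimitiveRoot ζ q) (e : ℕ) :
    ∑ j ∈ range q, (ζ ^ e) ^ j = if q ∣ e then (q : ℂ) else 0 := by
  split_ifs with h
  · rw [(hζ.pow_eq_one_iff_dvd e).mpr h]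
    simp
  · have hx : ζ ^ e ≠ 1 := fun he => h ((hζ.pow_eq_one_iff_dvd e).mp he)
    have hxq : (ζ ^ e) ^ q = 1 := by
      rw [← pow_mul, mul_comm, pow_mul, hζ.pow_eq_one, one_pow]
    rw [geom_sum_eq hx, hxq]
    simp

private lemma main_id (q r : ℕ) (hq : 0 < q) (hr : r < q) {ζ : ℂ}
    (hζ : IsPrimitiveRoot ζ q) (m : ℕ) :
    ∑ j ∈ range q, ζ ^ (j * (q - r)) * (1 + ζ ^ j) ^ m
      = q * ∑ k ∈ (range (m + 1)).filter (fun k => k % q = r), (m.choose k : ℂ) := by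
  have expand : ∀ j, ζ ^ (j * (q - r)) * (1 + ζ ^ j) ^ m
      = ∑ k ∈ range (m + 1), (m.choose k : ℂ) * (ζ ^ (k + (q - r))) ^ j := by
    intro j
    rw [add_comm (1 : ℂ), add_pow, Finset.mul_sum]
    refine Finset.sum_congr rfl fun k hk => ?_
    rw [one_pow, mul_one, ← pow_mul, ← pow_mul,
      show (k + (q - r)) * j = j * (q - r) + j * k by ring, pow_add]
    ring
  rw [Finset.sum_congr rfl fun j _ => expand j, Finset.sum_comm]
  have : ∀ k ∈ range (m + 1),
      ∑ j ∈ range q, (m.choose k : ℂ) * (ζ ^ (k + (q - r))) ^ j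
        = if k % q = r then (q : ℂ) * (m.choose k : ℂ) else 0 := by
    intro k _
    rw [← Finset.mul_sum, geomsum_prim hq hζ]
    have hiff : q ∣ k + (q - r) ↔ k % q = r := by
      have step : q ∣ k + (q - r) ↔ ((k : ℤ) - r) % q = 0 := by
        rw [← Int.natCast_dvd_natCast]
        push_cast [Nat.cast_sub hr.le]
        rw [show (k : ℤ) + ((q : ℤ) - (r : ℤ)) = (q : ℤ) + ((k : ℤ) - r) by ring,
          dvd_add_right (dvd_refl (q : ℤ))]
        exact Int.dvd_iff_emod_eq_zero
      rw [step, ← Int.emod_eq_emod_iff_emod_sub_eq_zero,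
        Int.emod_eq_of_lt (a := (r : ℤ)) (b := (q : ℤ)) (by positivity) (by exact_mod_cast hr)]
      exact ⟨fun h => by exact_mod_cast h, fun h => by exact_mod_cast h⟩
    split_ifs with h1 h2 h2
    · ring
    · exact absurd (hiff.mp h1) h2
    · exact absurd (hiff.mpr h2) h1
    · ring
  rw [Finset.sum_congr rfl this, Finset.sum_ite, Finset.sum_const_zero, add_zero,
    Finset.mul_sum]

private lemma reindex (q r m : ℕ) (hq : 0 < q) (hr : r < q) :
    ∑ k ∈ (range (m + 1)).filter (fun k => k % q = r), m.choose k
      = ∑ i ∈ range (m / q + 1), m.choose (i * q + r) := by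
  have hsub : (range (m + 1)).filter (fun k => k % q = r)
      ⊆ (range (m / q * q + r + 1)).filter (fun k => k % q = r) := by
    intro k hk
    simp only [Finset.mem_filter, Finset.mem_range] at *
    obtain ⟨hk1, hk2⟩ := hk
    refine ⟨?_, hk2⟩
    have h1 : k / q ≤ m / q := Nat.div_le_div_right (by omega)
    have h2 : q * (k / q) + k % q = k := Nat.div_add_mod k q
    have h3 : q * (k / q) ≤ q * (m / q) := Nat.mul_le_mul_left q h1
    have h4 : m / q * q = q * (m / q) := Nat.mul_comm _ _
    omega
  rw [Finset.sum_subset hsub (fun k hk hnk => by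
    simp only [Finset.mem_filter, Finset.mem_range] at *
    exact Nat.choose_eq_zero_of_lt (by omega))]
  refine Finset.sum_nbij' (fun k => k / q) (fun i => i * q + r) ?_ ?_ ?_ ?_ ?_
  · intro k hk
    simp only [Finset.mem_filter, Finset.mem_range] at *
    obtain ⟨hk1, hk2⟩ := hk
    have h2 : q * (k / q) + k % q = k := Nat.div_add_mod k q
    have h4 : m / q * q = q * (m / q) := Nat.mul_comm _ _
    have h5 : q * (k / q) ≤ q * (m / q) := by omega
    have := Nat.le_of_mul_le_mul_left h5 hq
    omega
  · intro i hi
    simp only [Finset.mem_filter, Finset.mem_range] at *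
    constructor
    · have : i * q ≤ m / q * q := Nat.mul_le_mul_right q (by omega)
      omega
    · rw [mul_comm i q, Nat.mul_add_mod, Nat.mod_eq_of_lt hr]
  · intro k hk
    simp only [Finset.mem_filter, Finset.mem_range] at hk
    show k / q * q + r = k
    have h2 : q * (k / q) + k % q = k := Nat.div_add_mod k q
    have h4 : k / q * q = q * (k / q) := Nat.mul_comm _ _
    omega
  · intro i _
    show (i * q + r) / q = i
    rw [mul_comm, Nat.mul_add_div hq, Nat.div_eq_of_lt hr, add_zero]
  · intro k hk
    simp only [Finset.mem_filter, Finset.mem_range] at hk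
    show m.choose k = m.choose (k / q * q + r)
    have h2 : q * (k / q) + k % q = k := Nat.div_add_mod k q
    have h4 : k / q * q = q * (k / q) := Nat.mul_comm _ _
    congr 1
    omega

open Filter in
theorem binomial_residue_classes_balanced (q r : ℕ) (hq : 2 ≤ q) (hr : r < q) :
    Tendsto (fun n : ℕ =>
        (∑ i ∈ Finset.range ((n - 1) / q + 1), ((n - 1).choose (i * q + r) : ℝ)) /
          2 ^ (n - 1))
      atTop (nhds (1 / q)) := by
  have hq0 : 0 < q := by omega
  obtain ⟨ζ, hζ⟩ : ∃ ζ : ℂ, IsPrimitiveRoot ζ q :=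
    ⟨_, Complex.isPrimitiveRoot_exp q (by omega)⟩
  set g : ℕ → ℂ := fun m => (∑ j ∈ range q, ζ ^ (j * (q - r)) * ((1 + ζ ^ j) / 2) ^ m) / q
    with hg_def
  -- pointwise identity
  have key : ∀ m : ℕ,
      ((∑ i ∈ Finset.range (m / q + 1), (m.choose (i * q + r) : ℝ)) / 2 ^ m : ℝ)
        = (g m).re := by
    intro m
    have h1 : ((((∑ i ∈ Finset.range (m / q + 1), (m.choose (i * q + r) : ℝ)) / 2 ^ m : ℝ)) : ℂ)
        = g m := by
      simp only [hg_def]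
      have h2 : ∑ j ∈ range q, ζ ^ (j * (q - r)) * ((1 + ζ ^ j) / 2) ^ m
          = (∑ j ∈ range q, ζ ^ (j * (q - r)) * (1 + ζ ^ j) ^ m) / 2 ^ m := by
        rw [Finset.sum_div]
        refine Finset.sum_congr rfl fun j _ => ?_
        rw [div_pow]
        ring
      have h3 : (∑ k ∈ (range (m + 1)).filter (fun k => k % q = r), (m.choose k : ℂ))
          = ∑ i ∈ range (m / q + 1), (m.choose (i * q + r) : ℂ) := by
        exact_mod_cast reindex q r m hq0 hr
      rw [h2, main_id q r hq0 hr hζ m, h3]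
      have hq' : (q : ℂ) ≠ 0 := Nat.cast_ne_zero.mpr (by omega)
      have h2m : ((2 : ℂ)) ^ m ≠ 0 := pow_ne_zero _ (by norm_num)
      push_cast
      field_simp
    rw [← h1, Complex.ofReal_re]
  -- limit of g
  have hg : Tendsto g atTop (nhds (1 / q : ℂ)) := by
    have : Tendsto (fun m => ∑ j ∈ range q, ζ ^ (j * (q - r)) * ((1 + ζ ^ j) / 2) ^ m)
        atTop (nhds (∑ j ∈ range q, if j = 0 then (1 : ℂ) else 0)) := by
      refine tendsto_finset_sum _ fun j hj => ?_
      simp only [Finset.mem_range] at hj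
      by_cases hj0 : j = 0
      · subst hj0
        simp only [if_true]
        have : (fun m : ℕ => ζ ^ (0 * (q - r)) * ((1 + ζ ^ 0) / 2) ^ m)
            = fun _ => (1 : ℂ) := by
          funext m
          norm_num
        rw [this]
        exact tendsto_const_nhds
      · simp only [if_neg hj0]
        rw [show (0 : ℂ) = ζ ^ (j * (q - r)) * 0 by ring]
        refine Tendsto.const_mul _ ?_
        apply tendsto_pow_atTop_nhds_zero_of_norm_lt_one
        have hz1 : ζ ^ j ≠ 1 := by
          intro h
          have hd := (hζ.pow_eq_one_iff_dvd j).mp h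
          have := Nat.le_of_dvd (by omega) hd
          omega
        have hzn : ‖ζ ^ j‖ = 1 := by
          rw [norm_pow, Complex.norm_eq_one_of_pow_eq_one hζ.pow_eq_one (by omega), one_pow]
        set z := ζ ^ j with hz_def
        have hsq : z.re * z.re + z.im * z.im = 1 := by
          have h1 : Complex.normSq z = 1 := by
            rw [← Complex.sq_norm, hzn, one_pow]
          rw [← Complex.normSq_apply]
          exact h1
        have hre : z.re < 1 := by
          rcases lt_or_eq_of_le (show z.re ≤ 1 by nlinarith [sq_nonneg z.im]) with h | h
          · exact h
          · exfalso
            apply hz1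
            have him : z.im = 0 := by nlinarith
            exact Complex.ext (by simpa using h) (by simpa using him)
        rw [norm_div]
        simp only [Complex.norm_ofNat]
        rw [div_lt_one (by norm_num)]
        have h2 : ‖(1 : ℂ) + z‖ ^ 2 < 2 ^ 2 := by
          rw [Complex.sq_norm, Complex.normSq_apply]
          simp only [Complex.add_re, Complex.add_im, Complex.one_re, Complex.one_im]
          nlinarith
        nlinarith [norm_nonneg ((1 : ℂ) + z)]
    have hsum : (∑ j ∈ range q, if j = 0 then (1 : ℂ) else 0) = 1 := by
      rw [Finset.sum_ite_eq' (range q) 0 (fun _ => (1 : ℂ))]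
      simp [hq0]
    rw [hsum] at this
    simp only [hg_def]
    have := this.div_const (q : ℂ)
    simpa using this
  -- compose with n ↦ n - 1 and take real parts
  have hcomp : Tendsto (fun n : ℕ => g (n - 1)) atTop (nhds (1 / q : ℂ)) :=
    hg.comp (tendsto_sub_atTop_nat 1)
  have hre : Tendsto (fun n : ℕ => (g (n - 1)).re) atTop (nhds ((1 / q : ℂ)).re) :=
    (Complex.continuous_re.tendsto _).comp hcomp
  have hval : ((1 / q : ℂ)).re = 1 / (q : ℝ) := by
    rw [show ((1 / q : ℂ)) = (((1 / q : ℝ)) : ℂ) by push_cast; ring]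
    exact Complex.ofReal_re _
  rw [hval] at hre
  refine hre.congr fun n => ?_
  exact (key (n - 1)).symm
end

section
/- Let w ≠ 1 be a complex number with |w| = 1 and suppose gcd(s_1, ..., s_{k-1}) = 1. Then every complex root y of f_w(z) = z^m − ∑_{i=1}^{k-1} z^{m−s_i} − w satisfies |y| < α, where α is the unique positive real root of f_1(z) = z^m − ∑_{i=1}^{k-1} z^{m−s_i} − 1. -/
private lemma eq_abs_of_re_eq_abs {z : ℂ} (h : z.re = ‖z‖) : z = (‖z‖ : ℂ) := by
  have h2 : ‖z‖ ^ 2 = z.re ^ 2 + z.im ^ 2 := by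
    rw [Complex.sq_norm, Complex.normSq_apply]; ring
  have h3 : z.im ^ 2 = 0 := by rw [← h] at h2; linarith
  have him : z.im = 0 := by
    have := sq_eq_zero_iff.mp h3
    exact this
  apply Complex.ext
  · simpa using h
  · simp [him]

theorem f_w_roots_smaller_modulus (k m : ℕ) (hk : 2 ≤ k)
    (s : Fin (k - 1) → ℕ) (hmono : StrictMono s)
    (hpos : ∀ i, 0 < s i) (hlt : ∀ i, s i < m)
    (hgcd : Finset.univ.gcd s = 1)
    (w : ℂ) (hw1 : w ≠ 1) (hwabs : ‖w‖ = 1)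
    (α : ℝ) (hα : 0 < α ∧ α ^ m - (∑ i, α ^ (m - s i)) - 1 = 0)
    (y : ℂ) (hy : y ^ m - (∑ i, y ^ (m - s i)) - w = 0) :
    ‖y‖ < α := by
  obtain ⟨hα0, hαeq⟩ := hα
  have i0 : Fin (k - 1) := ⟨0, by omega⟩
  have hm : 0 < m := (hpos i0).trans (hlt i0)
  set a := ‖y‖ with ha
  have ha0 : 0 ≤ a := norm_nonneg y
  -- the equation in the form y^m = Σ + w
  have hyeq : y ^ m = (∑ i, y ^ (m - s i)) + w := by linear_combination hy
  -- α equation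
  have hαsum : (∑ i, α ^ (m - s i)) + 1 = α ^ m := by linarith
  -- triangle inequality
  have habs : a ^ m ≤ (∑ i, a ^ (m - s i)) + 1 := by
    calc a ^ m = ‖y ^ m‖ := by rw [norm_pow]
    _ = ‖(∑ i, y ^ (m - s i)) + w‖ := by rw [hyeq]
    _ ≤ ‖∑ i, y ^ (m - s i)‖ + ‖w‖ := norm_add_le _ _
    _ ≤ (∑ i, ‖y ^ (m - s i)‖) + 1 := by
        rw [hwabs]
        gcongr
        exact norm_sum_le _ _
    _ = (∑ i, a ^ (m - s i)) + 1 := by simp [norm_pow, ha]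
  -- key strict inequality for t > α
  have key : ∀ t : ℝ, α < t → (∑ i, t ^ (m - s i)) + 1 < t ^ m := by
    intro t ht
    have ht0 : 0 < t := hα0.trans ht
    have hmul : ((∑ i, t ^ (m - s i)) + 1) * α ^ m < t ^ m * α ^ m := by
      have hsum : ∀ i : Fin (k - 1), t ^ (m - s i) * α ^ m ≤ t ^ m * α ^ (m - s i) := by
        intro i
        have h1 : α ^ m = α ^ (m - s i) * α ^ (s i) := by
          rw [← pow_add, Nat.sub_add_cancel (hlt i).le]
        have h2 : t ^ m = t ^ (m - s i) * t ^ (s i) := by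
          rw [← pow_add, Nat.sub_add_cancel (hlt i).le]
        rw [h1, h2]
        have hle : α ^ (s i) ≤ t ^ (s i) := pow_le_pow_left₀ hα0.le ht.le _
        have htp : 0 < t ^ (m - s i) := pow_pos ht0 _
        have hαp : 0 < α ^ (m - s i) := pow_pos hα0 _
        calc t ^ (m - s i) * (α ^ (m - s i) * α ^ (s i))
            = (t ^ (m - s i) * α ^ (s i)) * α ^ (m - s i) := by ring
          _ ≤ (t ^ (m - s i) * t ^ (s i)) * α ^ (m - s i) :=
              mul_le_mul_of_nonneg_right (mul_le_mul_of_nonneg_left hle htp.le) hαp.le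
          _ = t ^ (m - s i) * t ^ (s i) * α ^ (m - s i) := by ring
      have hlast : α ^ m < t ^ m := pow_lt_pow_left₀ ht hα0.le hm.ne'
      calc ((∑ i, t ^ (m - s i)) + 1) * α ^ m
          = (∑ i, t ^ (m - s i) * α ^ m) + α ^ m := by rw [add_mul, one_mul, Finset.sum_mul]
        _ < (∑ i, t ^ m * α ^ (m - s i)) + t ^ m := by
            apply add_lt_add_of_le_of_lt _ hlast
            exact Finset.sum_le_sum fun i _ => hsum i
        _ = t ^ m * ((∑ i, α ^ (m - s i)) + 1) := by rw [mul_add, mul_one, Finset.mul_sum]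
        _ = t ^ m * α ^ m := by rw [hαsum]
    exact lt_of_mul_lt_mul_right hmul (pow_pos hα0 m).le
  by_contra hcon
  push_neg at hcon
  rcases lt_or_eq_of_le hcon with hlt' | heq
  · exact absurd habs (not_le.mpr (key a hlt'))
  -- equality case: a = α
  have haα : a = α := heq.symm
  have hy0 : y ≠ 0 := by
    intro h
    have h0 : a = 0 := by rw [ha, h, norm_zero]
    linarith
  have hym : y ^ m ≠ 0 := pow_ne_zero _ hy0
  have hαc : (α : ℂ) ≠ 0 := by exact_mod_cast hα0.ne'
  -- divide by y^m
  have hdiv : (∑ i, y ^ (m - s i) / y ^ m) + w / y ^ m = 1 := by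
    rw [← Finset.sum_div, ← add_div, ← hyeq, div_self hym]
  -- real parts
  have hre : (∑ i, (y ^ (m - s i) / y ^ m).re) + (w / y ^ m).re = 1 := by
    have := congrArg Complex.re hdiv
    simpa [Complex.add_re, Complex.re_sum] using this
  -- abs values
  have habsi : ∀ i : Fin (k - 1), ‖y ^ (m - s i) / y ^ m‖ = α ^ (m - s i) / α ^ m := by
    intro i
    rw [norm_div, norm_pow, norm_pow, ← ha, haα]
  have habsw : ‖w / y ^ m‖ = 1 / α ^ m := by
    rw [norm_div, norm_pow, ← ha, haα, hwabs]
  have habs_sum : (∑ i, ‖y ^ (m - s i) / y ^ m‖) + ‖w / y ^ m‖ = 1 := by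
    rw [habsw]
    have : (∑ i, ‖y ^ (m - s i) / y ^ m‖) = ∑ i, α ^ (m - s i) / α ^ m :=
      Finset.sum_congr rfl fun i _ => habsi i
    rw [this, ← Finset.sum_div]
    field_simp
    linarith
  -- each re ≤ abs
  have hrele : ∀ z : ℂ, z.re ≤ ‖z‖ := fun z => Complex.re_le_norm z
  have hsumle : (∑ i, (y ^ (m - s i) / y ^ m).re) ≤ ∑ i, ‖y ^ (m - s i) / y ^ m‖ :=
    Finset.sum_le_sum fun i _ => hrele _
  have hwle : (w / y ^ m).re ≤ ‖w / y ^ m‖ := hrele _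
  have hsum_eq : (∑ i, (y ^ (m - s i) / y ^ m).re) = ∑ i, ‖y ^ (m - s i) / y ^ m‖ := by
    linarith
  have hw_eq : (w / y ^ m).re = ‖w / y ^ m‖ := by linarith
  -- termwise equality
  have hterm : ∀ i : Fin (k - 1),
      (y ^ (m - s i) / y ^ m).re = ‖y ^ (m - s i) / y ^ m‖ := by
    intro i
    have := (Finset.sum_eq_sum_iff_of_le (fun i _ => hrele (y ^ (m - s i) / y ^ m))).mp hsum_eq
    exact this i (Finset.mem_univ i)
  -- so each y^(m-s i)/y^m is a positive real, deduce y^(s i) = α^(s i)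
  have hpow : ∀ i : Fin (k - 1), y ^ (s i) = (α : ℂ) ^ (s i) := by
    intro i
    have h1 : y ^ (m - s i) / y ^ m = ((α ^ (m - s i) / α ^ m : ℝ) : ℂ) := by
      rw [eq_abs_of_re_eq_abs (hterm i), habsi i]
    have h2 : y ^ (m - s i) * (α : ℂ) ^ m = ((α : ℂ)) ^ (m - s i) * y ^ m := by
      have hcast : ((α ^ (m - s i) / α ^ m : ℝ) : ℂ) = (α : ℂ) ^ (m - s i) / (α : ℂ) ^ m := by
        push_cast; ring
      rw [hcast] at h1
      field_simp at h1
      linear_combination h1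
    have hym' : y ^ m = y ^ (m - s i) * y ^ (s i) := by
      rw [← pow_add, Nat.sub_add_cancel (hlt i).le]
    have hαm' : (α : ℂ) ^ m = (α : ℂ) ^ (m - s i) * (α : ℂ) ^ (s i) := by
      rw [← pow_add, Nat.sub_add_cancel (hlt i).le]
    rw [hym', hαm'] at h2
    have hne : y ^ (m - s i) * (α : ℂ) ^ (m - s i) ≠ 0 :=
      mul_ne_zero (pow_ne_zero _ hy0) (pow_ne_zero _ hαc)
    have : y ^ (m - s i) * (α : ℂ) ^ (m - s i) * (α : ℂ) ^ (s i)
        = y ^ (m - s i) * (α : ℂ) ^ (m - s i) * y ^ (s i) := by linear_combination h2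
    exact (mul_left_cancel₀ hne this).symm
  -- let z = y/α; z^(s i) = 1 for all i
  set z : ℂ := y / (α : ℂ) with hz
  have hzpow : ∀ i : Fin (k - 1), z ^ (s i) = 1 := by
    intro i
    rw [hz, div_pow, hpow i, div_self (pow_ne_zero _ hαc)]
  have hdvd : orderOf z ∣ Finset.univ.gcd s :=
    Finset.dvd_gcd fun i _ => orderOf_dvd_of_pow_eq_one (hzpow i)
  rw [hgcd, Nat.dvd_one] at hdvd
  have hz1 : z = 1 := orderOf_eq_one_iff.mp hdvd
  have hyα : y = (α : ℂ) := by
    rw [hz, div_eq_one_iff_eq hαc] at hz1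
    exact hz1
  -- then w = 1, contradiction
  apply hw1
  have : w = y ^ m - ∑ i, y ^ (m - s i) := by linear_combination -hy
  rw [hyα] at this
  have hcast : ((α ^ m - ∑ i, α ^ (m - s i) : ℝ) : ℂ) = (α : ℂ) ^ m - ∑ i, (α : ℂ) ^ (m - s i) := by
    push_cast; ring
  rw [this, ← hcast]
  norm_cast
  linarith
end

section
/- Every complex root y of f_w(z) = z^m − ∑_{i=1}^{k-1} z^{m−s_i} − w with |w| = 1 satisfies |y| ≤ α, where α is the unique positive real root of f_1. -/
theorem f_w_roots_le_alpha (k m : ℕ) (hk : 2 ≤ k)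
    (s : Fin (k - 1) → ℕ) (hmono : StrictMono s)
    (hpos : ∀ i, 0 < s i) (hlt : ∀ i, s i < m)
    (w : ℂ) (hwabs : ‖w‖ = 1)
    (α : ℝ) (hα : 0 < α ∧ α ^ m - (∑ i, α ^ (m - s i)) - 1 = 0)
    (y : ℂ) (hy : y ^ m - (∑ i, y ^ (m - s i)) - w = 0) :
    ‖y‖ ≤ α := by
  obtain ⟨hαpos, hαeq⟩ := hα
  by_contra hcon
  push_neg at hcon
  set r := ‖y‖ with hr
  have hrpos : 0 < r := lt_trans hαpos hcon
  have hkpos : 0 < k - 1 := by omega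
  have hm : 0 < m := lt_trans (hpos ⟨0, hkpos⟩) (hlt ⟨0, hkpos⟩)
  have hyy : y ^ m = (∑ i, y ^ (m - s i)) + w := by linear_combination hy
  have htri : r ^ m ≤ (∑ i, r ^ (m - s i)) + 1 := by
    calc r ^ m = ‖y ^ m‖ := (norm_pow _ _).symm
      _ = ‖(∑ i, y ^ (m - s i)) + w‖ := by rw [hyy]
      _ ≤ ‖∑ i, y ^ (m - s i)‖ + ‖w‖ := norm_add_le _ _
      _ ≤ (∑ i, ‖y ^ (m - s i)‖) + 1 := by
          rw [hwabs]
          gcongr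
          exact norm_sum_le _ _
      _ = (∑ i, r ^ (m - s i)) + 1 := by simp [map_pow, hr]
  have ht : 1 < r / α := (one_lt_div hαpos).2 hcon
  have h1 : ∀ i, r ^ (m - s i) ≤ (r / α) ^ m * α ^ (m - s i) := by
    intro i
    have he : r ^ (m - s i) = (r / α) ^ (m - s i) * α ^ (m - s i) := by
      rw [← mul_pow, div_mul_cancel₀ _ (ne_of_gt hαpos)]
    rw [he]
    exact mul_le_mul_of_nonneg_right (pow_le_pow_right₀ ht.le (by omega)) (by positivity)
  have h2 : (1 : ℝ) < (r / α) ^ m := one_lt_pow₀ ht (by omega)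
  have key : (∑ i, r ^ (m - s i)) + 1 < r ^ m := by
    calc (∑ i, r ^ (m - s i)) + 1
        < (∑ i, (r / α) ^ m * α ^ (m - s i)) + (r / α) ^ m :=
          add_lt_add_of_le_of_lt (Finset.sum_le_sum fun i _ => h1 i) h2
      _ = (r / α) ^ m * ((∑ i, α ^ (m - s i)) + 1) := by
          rw [mul_add, Finset.mul_sum, mul_one]
      _ = (r / α) ^ m * α ^ m := by
          congr 1; linarith
      _ = r ^ m := by
          rw [← mul_pow, div_mul_cancel₀ _ (ne_of_gt hαpos)]
  linarith
end

section
/- Let S be a finite set of positive integers with |S| = k. Then the sequence A_{S,n} of the number of compositions of n with parts in S does not satisfy any linear recurrence relation with constant coefficients of degree less than k. -/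
open PowerSeries Polynomial Finset

section Helpers

variable (S : Finset ℕ)

private lemma cc_finite (hpos : ∀ s ∈ S, 0 < s) (n : ℕ) :
    Finite {l : List ℕ // l.sum = n ∧ ∀ p ∈ l, p ∈ S} := by
  apply Finite.of_injective (fun l : {l : List ℕ // l.sum = n ∧ ∀ p ∈ l, p ∈ S} =>
      (⟨l.1, fun hi => hpos _ (l.2.2 _ hi), l.2.1⟩ : Composition n))
  intro a b h
  exact Subtype.ext (congrArg Composition.blocks h)

private lemma list_nil (hpos : ∀ s ∈ S, 0 < s) {l : List ℕ} (hl : l.sum = 0)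
    (hm : ∀ p ∈ l, p ∈ S) : l = [] := by
  cases l with
  | nil => rfl
  | cons x t =>
    exfalso
    have hx := hpos x (hm x List.mem_cons_self)
    rw [List.sum_cons] at hl
    omega

end Helpers

/-- The number of compositions of `n` with all parts in `S`. -/
noncomputable def compCount (S : Finset ℕ) (n : ℕ) : ℕ :=
  Nat.card {l : List ℕ // l.sum = n ∧ ∀ p ∈ l, p ∈ S}

section Helpers2

variable (S : Finset ℕ)

private lemma cc_zero (hpos : ∀ s ∈ S, 0 < s) : compCount S 0 = 1 := by
  rw [compCount, Nat.card_eq_one_iff_unique]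
  refine ⟨⟨fun a b => ?_⟩, ⟨⟨[], by simp⟩⟩⟩
  apply Subtype.ext
  rw [list_nil S hpos a.2.1 a.2.2, list_nil S hpos b.2.1 b.2.2]

private lemma cc_rec (hpos : ∀ s ∈ S, 0 < s) {n : ℕ} (hn : 0 < n) :
    compCount S n = ∑ s ∈ S, if s ≤ n then compCount S (n - s) else 0 := by
  classical
  have hmem : ∀ (s : {s // s ∈ S.filter (fun t => t ≤ n)})
      (l : {l : List ℕ // l.sum = n - s.1 ∧ ∀ p ∈ l, p ∈ S}),
      (s.1 :: l.1).sum = n ∧ ∀ p ∈ s.1 :: l.1, p ∈ S := by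
    intro s l
    have hs := Finset.mem_filter.mp s.2
    constructor
    · rw [List.sum_cons, l.2.1]
      have := hs.2
      omega
    · intro p hp
      rcases List.mem_cons.mp hp with h | h
      · exact h ▸ hs.1
      · exact l.2.2 p h
  have key : compCount S n = Nat.card (Σ s : {s // s ∈ S.filter (fun t => t ≤ n)},
      {l : List ℕ // l.sum = n - s.1 ∧ ∀ p ∈ l, p ∈ S}) := by
    rw [compCount]
    apply Nat.card_congr
    refine (Equiv.ofBijective
      (fun x : (Σ s : {s // s ∈ S.filter (fun t => t ≤ n)},
          {l : List ℕ // l.sum = n - s.1 ∧ ∀ p ∈ l, p ∈ S}) =>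
        (⟨x.1.1 :: x.2.1, hmem x.1 x.2⟩ : {l : List ℕ // l.sum = n ∧ ∀ p ∈ l, p ∈ S}))
      ⟨?_, ?_⟩).symm
    · rintro ⟨⟨s, hs⟩, ⟨l, hl⟩⟩ ⟨⟨s', hs'⟩, ⟨l', hl'⟩⟩ h
      rw [Subtype.mk.injEq, List.cons.injEq] at h
      obtain ⟨h1, h2⟩ := h
      subst h1
      exact Sigma.ext rfl (heq_of_eq (Subtype.ext h2))
    · rintro ⟨l, hl, hlm⟩
      cases l with
      | nil => exfalso; simp at hl; omega
      | cons a t =>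
        rw [List.sum_cons] at hl
        have haS : a ∈ S := hlm a List.mem_cons_self
        have ht : t.sum = n - a := by omega
        refine ⟨⟨⟨a, Finset.mem_filter.mpr ⟨haS, by omega⟩⟩,
          ⟨t, ht, fun p hp => hlm p (List.mem_cons_of_mem a hp)⟩⟩, rfl⟩
  rw [key]
  haveI : ∀ (s : {s // s ∈ S.filter (fun t => t ≤ n)}),
      Finite {l : List ℕ // l.sum = n - s.1 ∧ ∀ p ∈ l, p ∈ S} :=
    fun s => cc_finite S hpos (n - s.1)
  letI : ∀ (s : {s // s ∈ S.filter (fun t => t ≤ n)}),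
      Fintype {l : List ℕ // l.sum = n - s.1 ∧ ∀ p ∈ l, p ∈ S} :=
    fun s => Fintype.ofFinite _
  rw [Nat.card_eq_fintype_card, Fintype.card_sigma]
  have : ∀ (s : {s // s ∈ S.filter (fun t => t ≤ n)}),
      Fintype.card {l : List ℕ // l.sum = n - s.1 ∧ ∀ p ∈ l, p ∈ S}
        = compCount S (n - s.1) := by
    intro s
    rw [compCount, Nat.card_eq_fintype_card]
  rw [Finset.sum_congr rfl (fun s _ => this s)]
  rw [Finset.sum_coe_sort (S.filter (fun t => t ≤ n)) (fun s => compCount S (n - s)),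
    Finset.sum_filter]

private lemma gf (hpos : ∀ s ∈ S, 0 < s) :
    (PowerSeries.mk fun n => (compCount S n : ℂ)) *
      (1 - ∑ s ∈ S, (PowerSeries.X : ℂ⟦X⟧) ^ s) = 1 := by
  ext n
  rw [mul_sub, mul_one, Finset.mul_sum, map_sub, map_sum]
  simp only [PowerSeries.coeff_mul_X_pow', PowerSeries.coeff_mk]
  rcases Nat.eq_zero_or_pos n with h | h
  · subst h
    rw [cc_zero S hpos]
    have h0 : ∀ s ∈ S, (if s ≤ 0 then ((compCount S (0 - s) : ℂ)) else 0) = 0 := by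
      intro s hs
      rw [if_neg]
      have := hpos s hs
      omega
    rw [Finset.sum_congr rfl h0]
    simp
  · rw [PowerSeries.coeff_one, if_neg (by omega), cc_rec S hpos h]
    push_cast
    ring

end Helpers2

theorem no_short_recurrence (S : Finset ℕ) (hpos : ∀ s ∈ S, 0 < s)
    (k : ℕ) (hk : S.card = k) :
    ¬ ∃ d : ℕ, d < k ∧ ∃ c : Fin d → ℂ, ∃ N : ℕ,
      ∀ n, N ≤ n → (compCount S n : ℂ) =
        ∑ i : Fin d, c i * (compCount S (n - ((i : ℕ) + 1)) : ℂ) := by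
  rintro ⟨d, hd, c, N, hrec⟩
  classical
  have hS : S.Nonempty := by
    rw [← Finset.card_pos, hk]; omega
  set m := S.max' hS with hmdef
  have hmS : m ∈ S := S.max'_mem hS
  have hm1 : 1 ≤ m := hpos m hmS
  have hkm : k ≤ m := by
    rw [← hk]
    have hsub : S ⊆ Finset.Icc 1 m :=
      fun s hs => Finset.mem_Icc.mpr ⟨hpos s hs, S.le_max' s hs⟩
    calc S.card ≤ (Finset.Icc 1 m).card := Finset.card_le_card hsub
    _ = m := by simp
  set pP : Polynomial ℂ := ∑ s ∈ S, Polynomial.X ^ s with hpP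
  set pQ : Polynomial ℂ :=
    1 - ∑ i : Fin d, Polynomial.C (c i) * Polynomial.X ^ ((i : ℕ) + 1) with hpQ
  set F : ℂ⟦X⟧ := PowerSeries.mk fun n => (compCount S n : ℂ) with hF
  have hPcoe : ((pP : Polynomial ℂ) : ℂ⟦X⟧) = ∑ s ∈ S, (PowerSeries.X : ℂ⟦X⟧) ^ s := by
    rw [hpP, ← Polynomial.coeToPowerSeries.ringHom_apply, map_sum]
    simp
  have hQcoe : ((pQ : Polynomial ℂ) : ℂ⟦X⟧) =
      1 - ∑ i : Fin d, PowerSeries.C (c i) * (PowerSeries.X : ℂ⟦X⟧) ^ ((i : ℕ) + 1) := by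
    rw [hpQ, Polynomial.coe_sub, Polynomial.coe_one,
      ← Polynomial.coeToPowerSeries.ringHom_apply, map_sum]
    simp
  have hFP : F * ((1 - pP : Polynomial ℂ) : ℂ⟦X⟧) = 1 := by
    rw [Polynomial.coe_sub, Polynomial.coe_one, hPcoe]
    exact gf S hpos
  -- coefficients of F * pQ
  have coeffFQ : ∀ t, (PowerSeries.coeff t) (F * (pQ : ℂ⟦X⟧)) =
      (compCount S t : ℂ) - ∑ i : Fin d,
        c i * (if (i : ℕ) + 1 ≤ t then ((compCount S (t - ((i : ℕ) + 1)) : ℕ) : ℂ) else 0) := by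
    intro t
    rw [hQcoe, mul_sub, mul_one, Finset.mul_sum, map_sub, map_sum, PowerSeries.coeff_mk]
    congr 1
    apply Finset.sum_congr rfl
    intro i _
    rw [mul_left_comm, PowerSeries.coeff_C_mul, PowerSeries.coeff_mul_X_pow']
    congr 1
    split_ifs with h
    · rw [PowerSeries.coeff_mk]
    · rfl
  set M : ℕ := N + d + 1 with hM
  have hzero : ∀ t, M ≤ t → (PowerSeries.coeff t) (F * (pQ : ℂ⟦X⟧)) = 0 := by
    intro t ht
    rw [coeffFQ t, sub_eq_zero]
    rw [hrec t (by omega)]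
    apply Finset.sum_congr rfl
    intro i _
    rw [if_pos (by have := i.2; omega)]
  set g : Polynomial ℂ := PowerSeries.trunc M (F * (pQ : ℂ⟦X⟧)) with hg
  have hGcoe : ((g : Polynomial ℂ) : ℂ⟦X⟧) = F * (pQ : ℂ⟦X⟧) := by
    ext t
    rw [Polynomial.coeff_coe, hg, PowerSeries.coeff_trunc]
    split_ifs with h
    · rfl
    · exact (hzero t (by omega)).symm
  have hmain : g * (1 - pP) = pQ := by
    rw [← Polynomial.coe_inj, Polynomial.coe_mul, hGcoe]
    calc F * (pQ : ℂ⟦X⟧) * ((1 - pP : Polynomial ℂ) : ℂ⟦X⟧)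
        = (pQ : ℂ⟦X⟧) * (F * ((1 - pP : Polynomial ℂ) : ℂ⟦X⟧)) := by ring
    _ = (pQ : ℂ⟦X⟧) := by rw [hFP, mul_one]
  -- degree computations
  have hPm : pP.coeff m = 1 := by
    rw [hpP, Polynomial.finset_sum_coeff]
    simp only [Polynomial.coeff_X_pow]
    rw [Finset.sum_ite_eq S m (fun _ => (1 : ℂ)), if_pos hmS]
  have h1Pm : (1 - pP).coeff m = -1 := by
    rw [Polynomial.coeff_sub, hPm, Polynomial.coeff_one, if_neg (by omega)]
    ring
  have h1Pne : (1 - pP) ≠ 0 := by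
    intro h
    rw [h, Polynomial.coeff_zero] at h1Pm
    norm_num at h1Pm
  have hPdegle : pP.natDegree ≤ m := by
    rw [hpP]
    apply Polynomial.natDegree_sum_le_of_forall_le
    intro s hs
    rw [Polynomial.natDegree_X_pow]
    exact S.le_max' s hs
  have h1Pdeg : (1 - pP).natDegree = m := by
    apply le_antisymm
    · refine le_trans (Polynomial.natDegree_sub_le _ _) ?_
      simp only [Polynomial.natDegree_one]
      omega
    · apply Polynomial.le_natDegree_of_ne_zero
      rw [h1Pm]
      exact neg_ne_zero.mpr one_ne_zero
  have hQdegle : pQ.natDegree ≤ d := by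
    rw [hpQ]
    refine le_trans (Polynomial.natDegree_sub_le _ _) ?_
    simp only [Polynomial.natDegree_one]
    rw [max_le_iff]
    refine ⟨by omega, ?_⟩
    apply Polynomial.natDegree_sum_le_of_forall_le
    intro i _
    refine le_trans (Polynomial.natDegree_C_mul_le _ _) ?_
    rw [Polynomial.natDegree_X_pow]
    have := i.2
    omega
  have hQne : pQ ≠ 0 := by
    intro h
    have h0 : pQ.coeff 0 = 1 := by
      rw [hpQ, Polynomial.coeff_sub, Polynomial.coeff_one, if_pos rfl,
        Polynomial.finset_sum_coeff]
      have : ∀ i ∈ (Finset.univ : Finset (Fin d)),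
          (Polynomial.C (c i) * Polynomial.X ^ ((i : ℕ) + 1)).coeff 0 = 0 := by
        intro i _
        rw [Polynomial.coeff_C_mul, Polynomial.coeff_X_pow, if_neg (by omega), mul_zero]
      rw [Finset.sum_congr rfl this]
      simp
    rw [h, Polynomial.coeff_zero] at h0
    exact one_ne_zero h0.symm
  have hgne : g ≠ 0 := by
    intro h
    rw [h, zero_mul] at hmain
    exact hQne hmain.symm
  have hdegmul : pQ.natDegree = g.natDegree + m := by
    rw [← hmain, Polynomial.natDegree_mul hgne h1Pne, h1Pdeg]
  omega
end

section
/- The number A_{S,n} of compositions of n with parts in S satisfies A_{S,n} = C·α^n + o(α^n) for some nonzero constant C, where α is the unique positive real root of z^m − ∑_{i=1}^{k-1} z^{m−s_i} − 1. -/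
section Comb
variable (S : Finset ℕ) (h0 : 0 ∉ S)

/-- cons equivalence for n ≥ 1 -/
noncomputable def consEquiv (n : ℕ) (hn : n ≠ 0) :
    (Σ x : {x : ℕ // x ∈ S ∧ x ≤ n}, {l : List ℕ // l.sum = n - x.1 ∧ ∀ p ∈ l, p ∈ S}) ≃
      {l : List ℕ // l.sum = n ∧ ∀ p ∈ l, p ∈ S} := by
  apply Equiv.ofBijective (fun q =>
    ⟨q.1.1 :: q.2.1, by
      obtain ⟨⟨x, hx, hxn⟩, ⟨l, hl1, hl2⟩⟩ := q
      constructor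
      · simp only [List.sum_cons, hl1]; omega
      · intro p hp
        rcases List.mem_cons.mp hp with h | h
        · exact h ▸ hx
        · exact hl2 p h⟩)
  constructor
  · rintro ⟨⟨x, hx⟩, ⟨l, hl⟩⟩ ⟨⟨y, hy⟩, ⟨t, ht⟩⟩ h
    simp only [Subtype.mk.injEq, List.cons.injEq] at h
    obtain ⟨rfl, rfl⟩ := h
    rfl
  · rintro ⟨l, hsum, hmem⟩
    match l, hsum, hmem with
    | [], hsum, hmem => exact absurd hsum.symm (by simpa using hn)
    | a :: t, hsum, hmem =>
      have ha : a ∈ S := hmem a List.mem_cons_self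
      have hs : a + t.sum = n := by simpa using hsum
      refine ⟨⟨⟨a, ha, by omega⟩, ⟨t, by show t.sum = n - a; omega, fun p hp => hmem p (List.mem_cons_of_mem a hp)⟩⟩, ?_⟩
      simp

include h0 in
theorem list_eq_nil (t : List ℕ) (h1 : t.sum = 0) (h2 : ∀ p ∈ t, p ∈ S) : t = [] := by
  match t, h1, h2 with
  | [], _, _ => rfl
  | a :: t, h1, h2 =>
    exfalso
    have ha := h2 a List.mem_cons_self
    simp only [List.sum_cons, Nat.add_eq_zero] at h1
    exact h0 (h1.1 ▸ ha)

include h0 in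
theorem compFinite (n : ℕ) : Finite {l : List ℕ // l.sum = n ∧ ∀ p ∈ l, p ∈ S} := by
  induction n using Nat.strong_induction_on with
  | _ n IH =>
    rcases Nat.eq_zero_or_pos n with rfl | hn
    · have : Subsingleton {l : List ℕ // l.sum = 0 ∧ ∀ p ∈ l, p ∈ S} := by
        constructor
        rintro ⟨l, hl, hl2⟩ ⟨l', hl', hl2'⟩
        have e1 := list_eq_nil S h0 l hl hl2
        have e2 := list_eq_nil S h0 l' hl' hl2'
        subst e1; subst e2; rfl
      exact Finite.of_subsingleton
    · have hn' : n ≠ 0 := by omega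
      have hfib : ∀ x : {x : ℕ // x ∈ S ∧ x ≤ n},
          Finite {l : List ℕ // l.sum = n - x.1 ∧ ∀ p ∈ l, p ∈ S} := by
        rintro ⟨x, hx, hxn⟩
        have hx0 : x ≠ 0 := fun h => h0 (h ▸ hx)
        exact IH (n - x) (by omega)
      have hidx : Finite {x : ℕ // x ∈ S ∧ x ≤ n} :=
        Finite.of_injective (fun x => (⟨x.1, x.2.1⟩ : {x // x ∈ S}))
          (by rintro ⟨a, _⟩ ⟨b, _⟩ h; simpa using h)
      exact Finite.of_equiv _ (consEquiv S n hn')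

include h0 in
theorem compCount_rec (n : ℕ) (hn : n ≠ 0) :
    compCount S n = ∑ x ∈ S.filter (· ≤ n), compCount S (n - x) := by
  classical
  have hfin : ∀ j, Finite {l : List ℕ // l.sum = j ∧ ∀ p ∈ l, p ∈ S} := compFinite S h0
  rw [compCount, ← Nat.card_congr (consEquiv S n hn)]
  have hidx : Finite {x : ℕ // x ∈ S ∧ x ≤ n} :=
    Finite.of_injective (fun x => (⟨x.1, x.2.1⟩ : {x // x ∈ S}))
      (by rintro ⟨a, _⟩ ⟨b, _⟩ h; simpa using h)
  have : Fintype {x : ℕ // x ∈ S ∧ x ≤ n} := Fintype.ofFinite _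
  have hfib : ∀ x : {x : ℕ // x ∈ S ∧ x ≤ n},
      Fintype {l : List ℕ // l.sum = n - x.1 ∧ ∀ p ∈ l, p ∈ S} :=
    fun x => Fintype.ofFinite _
  rw [Nat.card_eq_fintype_card, Fintype.card_sigma]
  rw [Finset.sum_subtype (p := fun x => x ∈ S ∧ x ≤ n) (S.filter (· ≤ n))
    (by intro x; simp) (fun x => compCount S (n - x))]
  congr 1
  ext x
  rw [compCount, Nat.card_eq_fintype_card]

include h0 in
theorem compCount_pos (n : ℕ) (l : List ℕ) (hl : l.sum = n) (hmem : ∀ p ∈ l, p ∈ S) :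
    0 < compCount S n := by
  have : Finite {l : List ℕ // l.sum = n ∧ ∀ p ∈ l, p ∈ S} := compFinite S h0 n
  have : Nonempty {l : List ℕ // l.sum = n ∧ ∀ p ∈ l, p ∈ S} := ⟨⟨l, hl, hmem⟩⟩
  exact Nat.card_pos

end Comb

theorem exists_residue (a g0 n d : ℕ) (hg0 : 0 < g0) (hd : d = Nat.gcd a g0) (hdn : d ∣ n) :
    ∃ c : ℕ, c < g0 ∧ (g0 ∣ n - c * a ∨ n < c * a) := by
  obtain ⟨e, he⟩ := hdn
  set x := Int.gcdA a g0 with hx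
  set y := Int.gcdB a g0 with hy
  have hbez : (d : ℤ) = a * x + g0 * y := by
    rw [hd]; exact_mod_cast Int.gcd_eq_gcd_ab (a : ℤ) (g0 : ℤ)
  set c : ℤ := (x * e) % g0 with hc
  have hc0 : 0 ≤ c := Int.emod_nonneg _ (by exact_mod_cast hg0.ne')
  have hclt : c < g0 := Int.emod_lt_of_pos _ (by exact_mod_cast hg0)
  refine ⟨c.toNat, by omega, ?_⟩
  rcases le_or_gt (c.toNat * a) n with hle | hlt
  · left
    set q : ℤ := (x * e) / g0 with hqdef
    have hq : x * (e : ℤ) = c + g0 * q := by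
      rw [hc, hqdef]; have := Int.mul_ediv_add_emod (x * (e:ℤ)) (g0:ℤ); linarith
    have h2 : (n : ℤ) = a * x * e + g0 * (y * e) := by
      push_cast [he]; rw [hbez]; ring
    have hdvd : (g0 : ℤ) ∣ (n : ℤ) - c * a := by
      refine ⟨a * q + y * e, ?_⟩
      rw [h2]
      have : (a:ℤ) * x * e = a * (c + g0 * q) := by rw [← hq]; ring
      rw [this]; ring
    have hcast : ((n - c.toNat * a : ℕ) : ℤ) = (n : ℤ) - c * a := by
      have h3 : (c.toNat : ℤ) = c := Int.toNat_of_nonneg hc0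
      rw [Nat.cast_sub hle]; push_cast; rw [h3]
    exact_mod_cast hcast ▸ hdvd
  · right; exact hlt

theorem rep_cofinite_aux (S : Finset ℕ) (hne : S.Nonempty) (h0 : ∀ x ∈ S, 0 < x) :
    ∃ N, ∀ n, S.gcd id ∣ n → N ≤ n →
      ∃ l : List ℕ, l.sum = n ∧ ∀ p ∈ l, p ∈ S := by
  induction hne using Finset.Nonempty.cons_induction with
  | singleton a =>
    refine ⟨0, fun n hdvd _ => ?_⟩
    rw [Finset.gcd_singleton, id] at hdvd
    obtain ⟨e, rfl⟩ := hdvd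
    exact ⟨List.replicate e a, by simp [List.sum_replicate, Nat.mul_comm], by simp⟩
  | cons a S ha hS IH =>
    obtain ⟨N0, hN0⟩ := IH (fun x hx => h0 x (Finset.mem_cons_of_mem hx))
    have hapos : 0 < a := h0 a (Finset.mem_cons_self a S)
    set g0 := S.gcd id with hg0def
    have hg0 : 0 < g0 := by
      obtain ⟨b, hb⟩ := hS
      have hbpos := h0 b (Finset.mem_cons_of_mem hb)
      rcases Nat.eq_zero_or_pos g0 with h | h
      · exfalso
        have : g0 ∣ b := Finset.gcd_dvd hb
        rw [h] at this
        omega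
      · exact h
    refine ⟨N0 + g0 * a, fun n hdvd hn => ?_⟩
    classical
    rw [Finset.cons_eq_insert, Finset.gcd_insert] at hdvd
    have hdvd' : Nat.gcd a g0 ∣ n := by
      have h5 : gcd (id a) (S.gcd id) = Nat.gcd a g0 := by
        rfl
      rwa [h5] at hdvd
    obtain ⟨c, hclt, hcase⟩ := exists_residue a g0 n _ hg0 rfl hdvd'
    have hca : c * a ≤ n := by nlinarith
    rcases hcase with hdg | hlt
    · have h6 : c * a + a ≤ g0 * a := by nlinarith
      obtain ⟨l, hlsum, hlmem⟩ := hN0 (n - c * a) hdg (by omega)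
      refine ⟨List.replicate c a ++ l, ?_, ?_⟩
      · simp [List.sum_replicate, hlsum]; omega
      · intro p hp
        rcases List.mem_append.mp hp with h | h
        · rw [List.eq_of_mem_replicate h]; exact Finset.mem_cons_self a S
        · exact Finset.mem_cons_of_mem (hlmem p h)
    · omega

theorem rep_cofinite (S : Finset ℕ) (hne : S.Nonempty) (h0 : ∀ x ∈ S, 0 < x)
    (hg : S.gcd id = 1) :
    ∃ N, ∀ n, N ≤ n → ∃ l : List ℕ, l.sum = n ∧ ∀ p ∈ l, p ∈ S := by
  obtain ⟨N, hN⟩ := rep_cofinite_aux S hne h0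
  exact ⟨N, fun n hn => hN n (hg ▸ Nat.one_dvd n) hn⟩

open Filter

theorem renewal_limit
    (m : ℕ) (hm2 : 2 ≤ m)
    (S : Finset ℕ) (hS1 : ∀ x ∈ S, 1 ≤ x) (hSm : ∀ x ∈ S, x ≤ m) (hmS : m ∈ S)
    (w : ℕ → ℝ) (hw : ∀ x ∈ S, 0 < w x) (hw1 : ∑ x ∈ S, w x = 1)
    (a : ℕ → ℝ) (ha0 : ∀ n, 0 ≤ a n)
    (harec : ∀ p, m ≤ p → a p = ∑ x ∈ S, w x * a (p - x))
    (T : ℕ → Prop) (hT0 : T 0)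
    (hTstep : ∀ r, T r → 0 < r → ∃ x ∈ S, x ≤ r ∧ T (r - x))
    (N₀ : ℕ) (hTlarge : ∀ n, N₀ ≤ n → T n)
    (hposa : ∀ j, N₀ ≤ j → 0 < a j) :
    ∃ C : ℝ, 0 < C ∧ Tendsto a atTop (nhds C) := by
  have Rne : (Finset.range m).Nonempty := ⟨0, Finset.mem_range.mpr (by omega)⟩
  have Sne : S.Nonempty := ⟨m, hmS⟩
  set M : ℕ → ℝ := fun n => (Finset.range m).sup' Rne (fun i => a (n + i)) with hM
  set L : ℕ → ℝ := fun n => (Finset.range m).inf' Rne (fun i => a (n + i)) with hL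
  -- upper and lower window bounds
  have upper : ∀ n p, n ≤ p → a p ≤ M n := by
    intro n p
    induction p using Nat.strong_induction_on with
    | _ p IH =>
      intro hnp
      rcases lt_or_ge p (n + m) with hlt | hge
      · have hpe : p = n + (p - n) := by omega
        have : a (n + (p - n)) ≤ M n :=
          Finset.le_sup' (fun i => a (n + i)) (Finset.mem_range.mpr (by omega))
        rwa [← hpe] at this
      · rw [harec p (by omega)]
        calc ∑ x ∈ S, w x * a (p - x) ≤ ∑ x ∈ S, w x * M n := by
              apply Finset.sum_le_sum
              intro x hx
              exact mul_le_mul_of_nonneg_left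
                (IH (p - x) (by have := hS1 x hx; omega) (by have := hSm x hx; omega))
                (hw x hx).le
          _ = M n := by rw [← Finset.sum_mul, hw1, one_mul]
  have lower : ∀ n p, n ≤ p → L n ≤ a p := by
    intro n p
    induction p using Nat.strong_induction_on with
    | _ p IH =>
      intro hnp
      rcases lt_or_ge p (n + m) with hlt | hge
      · have hpe : p = n + (p - n) := by omega
        have : L n ≤ a (n + (p - n)) :=
          Finset.inf'_le (fun i => a (n + i)) (Finset.mem_range.mpr (by omega))
        rwa [← hpe] at this
      · rw [harec p (by omega)]
        calc L n = ∑ x ∈ S, w x * L n := by rw [← Finset.sum_mul, hw1, one_mul]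
          _ ≤ ∑ x ∈ S, w x * a (p - x) := by
              apply Finset.sum_le_sum
              intro x hx
              exact mul_le_mul_of_nonneg_left
                (IH (p - x) (by have := hS1 x hx; omega) (by have := hSm x hx; omega))
                (hw x hx).le
  have hML : ∀ n, L n ≤ M n := by
    intro n
    have h1 : L n ≤ a (n + 0) :=
      Finset.inf'_le (fun i => a (n + i)) (Finset.mem_range.mpr (by omega))
    have h2 : a (n + 0) ≤ M n :=
      Finset.le_sup' (fun i => a (n + i)) (Finset.mem_range.mpr (by omega))
    linarith
  have hMant : Antitone M := by
    apply antitone_nat_of_succ_le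
    intro n
    apply Finset.sup'_le
    intro i hi
    exact upper n (n + 1 + i) (by omega)
  have hLmon : Monotone L := by
    apply monotone_nat_of_le_succ
    intro n
    apply Finset.le_inf'
    intro i hi
    exact lower n (n + 1 + i) (by omega)
  -- minimum weight
  set wmin : ℝ := S.inf' Sne w with hwmin
  have hwmin_pos : 0 < wmin := by
    rw [hwmin, Finset.lt_inf'_iff]
    exact hw
  have hwmin_le : ∀ x ∈ S, wmin ≤ w x := fun x hx => Finset.inf'_le _ hx
  have hwmin1 : wmin ≤ 1 := by
    have h1 : w m ≤ ∑ x ∈ S, w x :=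
      Finset.single_le_sum (fun x hx => (hw x hx).le) hmS
    have := hwmin_le m hmS
    linarith [hw1 ▸ h1]
  -- helper: one-step bound
  have helper : ∀ n p x B, x ∈ S → n + m ≤ p → a (p - x) ≤ B →
      a p ≤ M n - w x * (M n - B) := by
    intro n p x B hx hp hB
    rw [harec p (by omega)]
    rw [← Finset.sum_erase_add S _ hx]
    have h1 : ∑ y ∈ S.erase x, w y * a (p - y) ≤ ∑ y ∈ S.erase x, w y * M n := by
      apply Finset.sum_le_sum
      intro y hy
      have hyS := Finset.mem_of_mem_erase hy
      refine mul_le_mul_of_nonneg_left ?_ (hw y hyS).le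
      apply upper
      have := hSm y hyS; omega
    have h2 : ∑ y ∈ S.erase x, w y = 1 - w x := by
      have := Finset.sum_erase_add S w hx
      linarith [hw1]
    have h2' : ∑ y ∈ S.erase x, w y * M n = (1 - w x) * M n := by
      rw [← Finset.sum_mul, h2]
    have h3 : w x * a (p - x) ≤ w x * B := mul_le_mul_of_nonneg_left hB (hw x hx).le
    have := h2' ▸ h1
    nlinarith [this, h3]
  -- key contraction estimate
  have key : ∀ n j, n ≤ j → j < n + m → a j = L n → ∀ p,
      (p = j ∨ (j + m ≤ p ∧ T (p - j - m))) → a p ≤ M n - wmin ^ (p - j) * (M n - L n) := by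
    intro n j hnj hjm haj p
    induction p using Nat.strong_induction_on with
    | _ p IH =>
      rintro (rfl | ⟨hpm, hT'⟩)
      · simp [haj]
      · have hr : p = j + m + (p - j - m) := by omega
        set r := p - j - m with hrdef
        rcases Nat.eq_zero_or_pos r with hr0 | hrpos
        · -- p = j + m
          have hpjm : p = j + m := by omega
          have h1 : a (p - m) ≤ L n := by
            have : p - m = j := by omega
            rw [this, haj]
          have h2 := helper n p m (L n) hmS (by omega) h1
          have hpj : p - j = m := by omega
          rw [hpj]
          have hpow : wmin ^ m ≤ w m := by
            calc wmin ^ m ≤ wmin ^ 1 :=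
                  pow_le_pow_of_le_one hwmin_pos.le hwmin1 (by omega)
              _ = wmin := pow_one _
              _ ≤ w m := hwmin_le m hmS
          nlinarith [hML n, h2, hpow]
        · -- r > 0
          obtain ⟨x₀, hx₀S, hx₀r, hTr⟩ := hTstep r hT' hrpos
          have hx₀1 := hS1 x₀ hx₀S
          have hx₀m := hSm x₀ hx₀S
          have hp' : p - x₀ = j + m + (r - x₀) := by omega
          have hIH : a (p - x₀) ≤ M n - wmin ^ (p - x₀ - j) * (M n - L n) := by
            apply IH (p - x₀) (by omega)
            right
            refine ⟨by omega, ?_⟩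
            have : p - x₀ - j - m = r - x₀ := by omega
            rw [this]; exact hTr
          have h2 := helper n p x₀ _ hx₀S (by omega) hIH
          have hpow : wmin ^ (p - j) ≤ w x₀ * wmin ^ (p - x₀ - j) := by
            have he : p - j = x₀ + (p - x₀ - j) := by omega
            rw [he, pow_add]
            have h4 : wmin ^ x₀ ≤ w x₀ := by
              calc wmin ^ x₀ ≤ wmin ^ 1 :=
                    pow_le_pow_of_le_one hwmin_pos.le hwmin1 (by omega)
                _ = wmin := pow_one _
                _ ≤ w x₀ := hwmin_le x₀ hx₀S
            exact mul_le_mul_of_nonneg_right h4 (pow_nonneg hwmin_pos.le _)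
          have hMLn := hML n
          nlinarith [h2, hpow, pow_nonneg hwmin_pos.le (p - x₀ - j), (hw x₀ hx₀S).le]
  -- contraction over windows
  set N : ℕ := N₀ + 2 * m with hN
  set δ : ℝ := wmin ^ (N + m) with hδ
  have hδpos : 0 < δ := pow_pos hwmin_pos _
  have hδ1 : δ ≤ 1 := pow_le_one₀ hwmin_pos.le hwmin1
  have hcontr : ∀ n, M (n + N) - L (n + N) ≤ (1 - δ) * (M n - L n) := by
    intro n
    obtain ⟨i₀, hi₀, hLn⟩ := Finset.exists_mem_eq_inf' Rne (fun i => a (n + i))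
    rw [Finset.mem_range] at hi₀
    set j := n + i₀ with hj
    have hstep : ∀ p, n + N ≤ p → p < n + N + m → a p ≤ M n - δ * (M n - L n) := by
      intro p hp1 hp2
      have hk := key n j (by omega) (by omega) hLn.symm p
        (Or.inr ⟨by omega, hTlarge _ (by omega)⟩)
      have hle : δ ≤ wmin ^ (p - j) := by
        apply pow_le_pow_of_le_one hwmin_pos.le hwmin1
        omega
      nlinarith [hk, hle, sub_nonneg.mpr (hML n)]
    have hMb : M (n + N) ≤ M n - δ * (M n - L n) := by
      apply Finset.sup'_le
      intro i hi
      rw [Finset.mem_range] at hi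
      exact hstep (n + N + i) (by omega) (by omega)
    have hLb : L n ≤ L (n + N) := hLmon (by omega)
    nlinarith [hMb, hLb]
  -- oscillation tends to zero
  have hosc_nonneg : ∀ n, 0 ≤ M n - L n := fun n => sub_nonneg.mpr (hML n)
  have hosc_anti : Antitone (fun n => M n - L n) := fun p q hpq =>
    sub_le_sub (hMant hpq) (hLmon hpq)
  have hosc_geo : ∀ jj : ℕ, M (N * jj) - L (N * jj) ≤ (1 - δ) ^ jj * (M 0 - L 0) := by
    intro jj
    induction jj with
    | zero => simp
    | succ j IH =>
      have h1 : N * (j + 1) = N * j + N := by ring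
      rw [h1]
      calc M (N * j + N) - L (N * j + N) ≤ (1 - δ) * (M (N * j) - L (N * j)) := hcontr _
        _ ≤ (1 - δ) * ((1 - δ) ^ j * (M 0 - L 0)) :=
            mul_le_mul_of_nonneg_left IH (by linarith)
        _ = (1 - δ) ^ (j + 1) * (M 0 - L 0) := by ring
  have hbddM : BddBelow (Set.range M) := by
    refine ⟨L 0, ?_⟩
    rintro x ⟨n, rfl⟩
    exact le_trans (hLmon (Nat.zero_le n)) (hML n)
  have hbddosc : BddBelow (Set.range (fun n => M n - L n)) := by
    refine ⟨0, ?_⟩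
    rintro x ⟨n, rfl⟩
    exact hosc_nonneg n
  have hosctends : Tendsto (fun n => M n - L n) atTop (nhds (⨅ n, M n - L n)) :=
    tendsto_atTop_ciInf hosc_anti hbddosc
  have hgeo_tends : Tendsto (fun jj : ℕ => (1 - δ) ^ jj * (M 0 - L 0)) atTop (nhds 0) := by
    have h1 : Tendsto (fun jj : ℕ => (1 - δ) ^ jj) atTop (nhds 0) := by
      apply tendsto_pow_atTop_nhds_zero_of_lt_one (by linarith) (by linarith)
    simpa using h1.mul_const (M 0 - L 0)
  have hinf0 : (⨅ n, M n - L n) = 0 := by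
    apply le_antisymm
    · apply ge_of_tendsto' hgeo_tends
      intro jj
      exact le_trans (ciInf_le hbddosc (N * jj)) (hosc_geo jj)
    · exact le_ciInf hosc_nonneg
  rw [hinf0] at hosctends
  -- limits
  set C : ℝ := ⨅ n, M n with hC
  have hMtends : Tendsto M atTop (nhds C) := tendsto_atTop_ciInf hMant hbddM
  have hLtends : Tendsto L atTop (nhds C) := by
    have h1 : Tendsto (fun n => M n - (M n - L n)) atTop (nhds (C - 0)) :=
      hMtends.sub hosctends
    simpa using h1
  have hCpos : 0 < C := by
    have h1 : L N₀ ≤ C := by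
      apply ge_of_tendsto hLtends
      filter_upwards [eventually_ge_atTop N₀] with q hq
      exact hLmon hq
    have h2 : 0 < L N₀ := by
      have : 0 < (Finset.range m).inf' Rne (fun i => a (N₀ + i)) := by
        rw [Finset.lt_inf'_iff]
        intro i hi
        exact hposa (N₀ + i) (by omega)
      exact this
    linarith
  refine ⟨C, hCpos, ?_⟩
  apply tendsto_of_tendsto_of_tendsto_of_le_of_le hLtends hMtends
  · intro n
    exact lower n n le_rfl
  · intro n
    exact upper n n le_rfl

open Filter in
theorem compCount_asymptotics (k : ℕ) (hk : 2 ≤ k) (s : Fin k → ℕ)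
    (hmono : StrictMono s) (hpos : ∀ i, 0 < s i)
    (hgcd : (Finset.univ.filter (fun i : Fin k => (i : ℕ) < k - 1)).gcd s = 1)
    (S : Finset ℕ) (hS : S = Finset.image s Finset.univ)
    (m : ℕ) (hm : m = s ⟨k - 1, by omega⟩)
    (α : ℝ) (hαpos : 0 < α)
    (hαroot : α ^ m -
      (∑ i ∈ Finset.univ.filter (fun i : Fin k => (i : ℕ) < k - 1), α ^ (m - s i)) - 1 = 0)
    (hαuniq : ∀ β : ℝ, 0 < β →
      β ^ m -
        (∑ i ∈ Finset.univ.filter (fun i : Fin k => (i : ℕ) < k - 1), β ^ (m - s i)) - 1 = 0 →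
      β = α) :
    ∃ C : ℝ, C ≠ 0 ∧
      Tendsto (fun n : ℕ => ((compCount S n : ℝ) - C * α ^ n) / α ^ n) atTop (nhds 0) := by
  classical
  set F := Finset.univ.filter (fun i : Fin k => (i : ℕ) < k - 1) with hF
  set last : Fin k := ⟨k - 1, by omega⟩ with hlast
  have hk0 : 0 < k := by omega
  set i0 : Fin k := ⟨0, hk0⟩ with hi0
  have hzeromem : i0 ∈ F := by
    simp [hF, hi0]; omega
  have hsle : ∀ i : Fin k, s i ≤ m := by
    intro i
    rw [hm]
    exact hmono.monotone (by rw [Fin.le_def]; simp [hlast]; omega)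
  have hslt : ∀ i ∈ F, s i < m := by
    intro i hi
    rw [hF, Finset.mem_filter] at hi
    rw [hm]
    exact hmono (by rw [Fin.lt_def]; simp [hlast]; omega)
  have hm2 : 2 ≤ m := by
    have h1 := hslt i0 hzeromem
    have h2 := hpos i0
    omega
  have hα0 : α ≠ 0 := hαpos.ne'
  have hαm0 : α ^ m ≠ 0 := pow_ne_zero _ hα0
  have hrootsum : ∑ i ∈ F, α ^ (m - s i) + 1 = α ^ m := by
    rw [hF]; linarith [hαroot]
  have hα1 : 1 < α := by
    by_contra h
    push_neg at h
    have hαm : α ^ m ≤ 1 := pow_le_one₀ hαpos.le h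
    have hterm : (0:ℝ) < α ^ (m - s i0) := pow_pos hαpos _
    have hsum : α ^ (m - s i0) ≤ ∑ i ∈ F, α ^ (m - s i) :=
      Finset.single_le_sum (f := fun i => α ^ (m - s i)) (fun i _ => (pow_pos hαpos _).le) hzeromem
    linarith
  -- basic facts about S
  have h0S : 0 ∉ S := by
    rw [hS]
    simp only [Finset.mem_image, Finset.mem_univ, true_and, not_exists]
    intro i h
    exact absurd h (by have := hpos i; omega)
  have hS1 : ∀ x ∈ S, 1 ≤ x := by
    intro x hx
    rw [hS] at hx
    obtain ⟨i, _, rfl⟩ := Finset.mem_image.mp hx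
    exact hpos i
  have hSm : ∀ x ∈ S, x ≤ m := by
    intro x hx
    rw [hS] at hx
    obtain ⟨i, _, rfl⟩ := Finset.mem_image.mp hx
    exact hsle i
  have hmS : m ∈ S := by
    rw [hS, hm]
    exact Finset.mem_image.mpr ⟨last, Finset.mem_univ _, rfl⟩
  have hgcdS : S.gcd id = 1 := by
    have hdvd : S.gcd id ∣ F.gcd s := by
      apply Finset.dvd_gcd
      intro i hi
      have : s i ∈ S := by
        rw [hS]; exact Finset.mem_image.mpr ⟨i, Finset.mem_univ _, rfl⟩
      exact Finset.gcd_dvd this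
    rw [hF] at hgcd
    rw [hgcd] at hdvd
    exact Nat.dvd_one.mp hdvd
  -- the weight identity
  have hwsum : ∑ x ∈ S, (α ^ x)⁻¹ = 1 := by
    rw [hS, Finset.sum_image (fun i _ j _ h => hmono.injective h)]
    have hsplit : ∀ f : Fin k → ℝ, ∑ i, f i = ∑ i ∈ F, f i + f last := by
      intro f
      rw [← Finset.sum_filter_add_sum_filter_not Finset.univ (fun i : Fin k => (i:ℕ) < k - 1) f,
        ← hF]
      congr 1
      have : Finset.univ.filter (fun i : Fin k => ¬ (i:ℕ) < k - 1) = {last} := by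
        ext i
        simp only [Finset.mem_filter, Finset.mem_univ, true_and, Finset.mem_singleton]
        constructor
        · intro h
          have := i.isLt
          exact Fin.ext (by simp [hlast]; omega)
        · intro h
          rw [h]
          simp [hlast]
      rw [this, Finset.sum_singleton]
    rw [hsplit (fun i => (α ^ s i)⁻¹)]
    have hml : s last = m := hm.symm
    have hterm : ∀ i ∈ F, (α ^ s i)⁻¹ = α ^ (m - s i) * (α ^ m)⁻¹ := by
      intro i hi
      rw [pow_sub₀ α hα0 (hsle i)]
      field_simp
    rw [Finset.sum_congr rfl hterm, ← Finset.sum_mul, hml]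
    field_simp
    linarith [hrootsum]
  -- representability
  obtain ⟨N₀, hN₀⟩ := rep_cofinite S ⟨m, hmS⟩ (fun x hx => hS1 x hx) hgcdS
  -- set up renewal lemma
  set a : ℕ → ℝ := fun n => (compCount S n : ℝ) / α ^ n with ha
  have ha0 : ∀ n, 0 ≤ a n := fun n => div_nonneg (Nat.cast_nonneg _) (pow_nonneg hαpos.le _)
  have harec : ∀ p, m ≤ p → a p = ∑ x ∈ S, (α ^ x)⁻¹ * a (p - x) := by
    intro p hp
    have hrec := compCount_rec S h0S p (by omega)
    have hfilter : S.filter (· ≤ p) = S := by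
      apply Finset.filter_true_of_mem
      intro x hx
      have := hSm x hx; omega
    rw [hfilter] at hrec
    rw [ha]
    simp only
    rw [hrec]
    push_cast
    rw [Finset.sum_div]
    apply Finset.sum_congr rfl
    intro x hx
    have hxm := hSm x hx
    have hpe : (α:ℝ) ^ p = α ^ x * α ^ (p - x) := by
      rw [← pow_add]
      congr 1
      omega
    rw [hpe]
    have hx0 : (α:ℝ) ^ x ≠ 0 := pow_ne_zero _ hα0
    have hpx0 : (α:ℝ) ^ (p - x) ≠ 0 := pow_ne_zero _ hα0
    field_simp
  set T : ℕ → Prop := fun r => ∃ l : List ℕ, l.sum = r ∧ ∀ p ∈ l, p ∈ S with hT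
  have hT0 : T 0 := ⟨[], by simp, by simp⟩
  have hTstep : ∀ r, T r → 0 < r → ∃ x ∈ S, x ≤ r ∧ T (r - x) := by
    rintro r ⟨l, hlsum, hlmem⟩ hr
    match l, hlsum, hlmem with
    | [], hlsum, _ => exact absurd hr (by rw [List.sum_nil] at hlsum; omega)
    | x :: t, hlsum, hlmem =>
      have hx : x ∈ S := hlmem x List.mem_cons_self
      have hsum : x + t.sum = r := by simpa using hlsum
      exact ⟨x, hx, by omega, ⟨t, by omega, fun p hp => hlmem p (List.mem_cons_of_mem x hp)⟩⟩
  have hTlarge : ∀ n, N₀ ≤ n → T n := fun n hn => hN₀ n hn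
  have hposa : ∀ j, N₀ ≤ j → 0 < a j := by
    intro j hj
    obtain ⟨l, hlsum, hlmem⟩ := hN₀ j hj
    have hcc := compCount_pos S h0S j l hlsum hlmem
    rw [ha]
    apply div_pos _ (pow_pos hαpos _)
    exact_mod_cast hcc
  obtain ⟨C, hCpos, hCt⟩ := renewal_limit m hm2 S hS1 hSm hmS (fun x => (α ^ x)⁻¹)
    (fun x _ => inv_pos.mpr (pow_pos hαpos _)) hwsum a ha0 harec T hT0 hTstep N₀ hTlarge hposa
  refine ⟨C, hCpos.ne', ?_⟩
  have heq : (fun n : ℕ => ((compCount S n : ℝ) - C * α ^ n) / α ^ n) = fun n => a n - C := by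
    funext n
    have hn0 : (α:ℝ) ^ n ≠ 0 := pow_ne_zero _ hα0
    rw [ha]
    field_simp
  rw [heq]
  have := hCt.sub (tendsto_const_nhds (x := C))
  simpa using this
end
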